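/- For every real number x, H(G(2,q)·G(x,q)) = G(x,q)² in ℝ[[q]]. -/

import Mathlib

/-- The formal power series `∑_{n ≥ 1} c(n) q^{e(n)}` in `ℝ[[q]]`, defined coefficientwise.
(Any `n ≥ 1` with `n² = k` satisfies `n ≤ k + 1`, so the truncated range captures every term.) -/
noncomputable def mkSum (e : ℕ → ℕ) (c : ℕ → ℝ) : PowerSeries ℝ :=
  PowerSeries.mk fun k => ∑ n ∈ Finset.range (k + 2), if 1 ≤ n ∧ e n = k then c n else 0

/-- `G(x,q) = 1 + 2 ∑_{n ≥ 1} T_{2n}(x/2) q^{n²}`, where `T` is the Chebyshev polynomial of the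
first kind. -/
noncomputable def G (x : ℝ) : PowerSeries ℝ :=
  1 + 2 * mkSum (fun n => n ^ 2) fun n => (Polynomial.Chebyshev.T ℝ (2 * (n : ℤ))).eval (x / 2)

/-- The 2-dissection ("huffing") operator `H(∑ a_n q^n) = ∑ a_{2n} q^n`. -/
noncomputable def H (F : PowerSeries ℝ) : PowerSeries ℝ :=
  PowerSeries.mk fun n => PowerSeries.coeff (R := ℝ) (2 * n) F

open Finset Polynomial Polynomial.Chebyshev

/-- `T_{2n}(x/2)` as a function of `n : ℤ`. -/
noncomputable def tx (x : ℝ) (n : ℤ) : ℝ := (Polynomial.Chebyshev.T ℝ (2 * n)).eval (x / 2)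

/-- integer square roots of `k`. -/
noncomputable def Sq (k : ℕ) : Finset ℤ := (Finset.Icc (-(k : ℤ)) k).filter fun n => n ^ 2 = (k : ℤ)

/-- integer lattice points on the circle of radius `√N`. -/
noncomputable def Dk (N : ℕ) : Finset (ℤ × ℤ) :=
  ((Finset.Icc (-(N : ℤ)) N) ×ˢ (Finset.Icc (-(N : ℤ)) N)).filter
    fun p => p.1 ^ 2 + p.2 ^ 2 = (N : ℤ)

lemma neg_sq_le_self (a : ℤ) : -(a ^ 2) ≤ a := by
  nlinarith [Int.le_self_sq (-a)]

lemma even_add_of_sq_add_sq {m n N : ℤ} (h : m ^ 2 + n ^ 2 = 2 * N) : Even (m + n) := by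
  have h2 : Even (m ^ 2 + n ^ 2) := ⟨N, by linarith⟩
  have h3 := Int.even_add.mp h2
  rw [Int.even_add]
  simpa [Int.even_pow] using h3

lemma tx_neg (x : ℝ) (n : ℤ) : tx x (-n) = tx x n := by
  simp [tx, mul_neg]

lemma tx_mul (x : ℝ) (a b : ℤ) : 2 * (tx x a * tx x b) = tx x (a + b) + tx x (a - b) := by
  have h := congrArg (Polynomial.eval (x / 2)) (Polynomial.Chebyshev.T_mul_T ℝ (2 * a) (2 * b))
  simp only [Polynomial.eval_mul, Polynomial.eval_add, Polynomial.eval_ofNat] at h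
  unfold tx
  rw [show 2 * (a + b) = 2 * a + 2 * b by ring, show 2 * (a - b) = 2 * a - 2 * b by ring]
  linear_combination h

lemma T_eval_one (n : ℤ) : (Polynomial.Chebyshev.T ℝ n).eval 1 = 1 := by
  induction n using Polynomial.Chebyshev.induct with
  | zero => simp
  | one => simp
  | add_two n ih1 ih2 =>
      rw [Polynomial.Chebyshev.T_add_two]
      simp [ih1, ih2]
      norm_num
  | neg_add_one n ih1 ih2 =>
      have h := Polynomial.Chebyshev.T_sub_one ℝ (-n)
      rw [show (-(n : ℤ) - 1) = (-n) - 1 by ring, h]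
      rw [Polynomial.Chebyshev.T_neg] at ih1
      simp [ih1, ih2]
      norm_num

lemma tx_two (n : ℤ) : tx 2 n = 1 := by
  simp only [tx]
  norm_num [_root_.T_eval_one]

lemma coeff_G (x : ℝ) (k : ℕ) :
    (PowerSeries.coeff (R := ℝ) k) (G x) = ∑ n ∈ Sq k, tx x n := by
  have h2 : (2 : PowerSeries ℝ) = PowerSeries.C (R := ℝ) 2 := by
    simpa using (map_ofNat (PowerSeries.C (R := ℝ)) 2).symm
  rw [G, h2, map_add, PowerSeries.coeff_C_mul, mkSum, PowerSeries.coeff_mk,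
    PowerSeries.coeff_one]
  rcases eq_or_ne k 0 with rfl | hk
  · have hS : Sq 0 = {0} := by
      ext n
      simp only [Sq, mem_filter, Finset.mem_Icc, Finset.mem_singleton]
      constructor
      · rintro ⟨_, h⟩
        push_cast at h
        exact sq_eq_zero_iff.mp h
      · rintro rfl; norm_num
    rw [hS]
    rw [Finset.sum_eq_zero]
    · simp [tx]
    · intro n hn
      have hno : ¬(1 ≤ n ∧ n ^ 2 = 0) := by
        rintro ⟨h1, hsq⟩
        have := sq_eq_zero_iff.mp hsq
        omega
      rw [if_neg hno]
  · by_cases hsq : ∃ m : ℕ, 1 ≤ m ∧ m ^ 2 = k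
    · obtain ⟨m, hm1, hmk⟩ := hsq
      have hmle : m ≤ k := by nlinarith
      have hm2 : (m : ℤ) ^ 2 = (k : ℤ) := by exact_mod_cast congrArg (Nat.cast : ℕ → ℤ) hmk
      have hmle' : (m : ℤ) ≤ (k : ℤ) := by exact_mod_cast hmle
      have hsum : (∑ n ∈ Finset.range (k + 2), if 1 ≤ n ∧ n ^ 2 = k then
          (Polynomial.Chebyshev.T ℝ (2 * (n : ℤ))).eval (x / 2) else 0)
          = (Polynomial.Chebyshev.T ℝ (2 * (m : ℤ))).eval (x / 2) := by
        rw [Finset.sum_eq_single m]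
        · simp [hm1, hmk]
        · intro n _ hnm
          have : ¬(1 ≤ n ∧ n ^ 2 = k) := by
            rintro ⟨h1, h2'⟩
            exact hnm (by nlinarith)
          simp [this]
        · intro hm
          exact absurd (Finset.mem_range.mpr (by omega)) hm
      have hS : Sq k = {(m : ℤ), -(m : ℤ)} := by
        ext n
        simp only [Sq, mem_filter, Finset.mem_Icc, Finset.mem_insert, Finset.mem_singleton]
        constructor
        · rintro ⟨_, h⟩
          have h' : (n - m) * (n + m) = 0 := by linear_combination h - hm2
          rcases mul_eq_zero.mp h' with h'' | h''
          · left; omega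
          · right; omega
        · rintro (rfl | rfl)
          · exact ⟨⟨by omega, hmle'⟩, hm2⟩
          · exact ⟨⟨by omega, by omega⟩, by linear_combination hm2⟩
      rw [hS, Finset.sum_pair (by omega : (m : ℤ) ≠ -(m : ℤ)), tx_neg, hsum]
      simp only [tx, if_neg hk]
      ring
    · push_neg at hsq
      have hsum : (∑ n ∈ Finset.range (k + 2), if 1 ≤ n ∧ n ^ 2 = k then
          (Polynomial.Chebyshev.T ℝ (2 * (n : ℤ))).eval (x / 2) else 0) = 0 := by
        apply Finset.sum_eq_zero
        intro n _
        have : ¬(1 ≤ n ∧ n ^ 2 = k) := fun ⟨h1, h2'⟩ => (hsq n h1) h2'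
        simp [this]
      have hS : Sq k = ∅ := by
        apply Finset.eq_empty_of_forall_notMem
        intro n hn
        simp only [Sq, mem_filter, Finset.mem_Icc] at hn
        have hn0 : n ≠ 0 := by
          rintro rfl
          apply hk
          have := hn.2
          norm_num at this
          omega
        have h1 : 1 ≤ n.natAbs := by omega
        refine hsq n.natAbs h1 ?_
        have hcast : ((n.natAbs : ℤ)) ^ 2 = (k : ℤ) := by
          rw [show ((n.natAbs : ℤ)) = |n| from (Int.abs_eq_natAbs n).symm, sq_abs]
          exact hn.2
        exact_mod_cast hcast
      rw [hS, hsum]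
      simp [hk]

lemma sum_antidiagonal_eq (f g : ℤ → ℝ) (N : ℕ) :
    ∑ ij ∈ Finset.HasAntidiagonal.antidiagonal N, (∑ m ∈ Sq ij.1, f m) * (∑ n ∈ Sq ij.2, g n)
      = ∑ p ∈ Dk N, f p.1 * g p.2 := by
  have step : ∀ ij : ℕ × ℕ, (∑ m ∈ Sq ij.1, f m) * (∑ n ∈ Sq ij.2, g n)
      = ∑ p ∈ Sq ij.1 ×ˢ Sq ij.2, f p.1 * g p.2 := by
    intro ij; rw [Finset.sum_mul_sum, Finset.sum_product]
  simp_rw [step]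
  rw [show (∑ ij ∈ Finset.HasAntidiagonal.antidiagonal N, ∑ p ∈ Sq ij.1 ×ˢ Sq ij.2, f p.1 * g p.2)
      = ∑ y ∈ (Finset.HasAntidiagonal.antidiagonal N).sigma (fun ij => Sq ij.1 ×ˢ Sq ij.2),
          f y.2.1 * g y.2.2 from Finset.sum_sigma' _ _ _]
  refine Finset.sum_nbij' (fun y => y.2)
    (fun p => ⟨((p.1 ^ 2).toNat, (p.2 ^ 2).toNat), p⟩) ?_ ?_ ?_ ?_ ?_
  · rintro ⟨⟨i, j⟩, m, n⟩ hy
    simp only [Finset.mem_sigma, Finset.HasAntidiagonal.mem_antidiagonal, Finset.mem_product, Sq, Dk,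
      mem_filter, Finset.mem_Icc] at hy ⊢
    obtain ⟨hij, ⟨⟨hm1, hm2⟩, hm3⟩, ⟨hn1, hn2⟩, hn3⟩ := hy
    have hiN : (i : ℤ) ≤ N := by exact_mod_cast Nat.le.intro hij
    have hjN : (j : ℤ) ≤ N := by
      have : j ≤ N := by omega
      exact_mod_cast this
    refine ⟨⟨⟨by omega, by omega⟩, by omega, by omega⟩, ?_⟩
    rw [hm3, hn3]
    exact_mod_cast congrArg (Nat.cast : ℕ → ℤ) hij
  · rintro ⟨m, n⟩ hp
    simp only [Dk, mem_filter, Finset.mem_product, Finset.mem_Icc] at hp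
    obtain ⟨⟨⟨hm1, hm2⟩, hn1, hn2⟩, hmn⟩ := hp
    have hm : m ≤ m ^ 2 := Int.le_self_sq m
    have hm' : -(m ^ 2) ≤ m := neg_sq_le_self m
    have hn : n ≤ n ^ 2 := Int.le_self_sq n
    have hn' : -(n ^ 2) ≤ n := neg_sq_le_self n
    have e1 : ((m ^ 2).toNat : ℤ) = m ^ 2 := Int.toNat_of_nonneg (sq_nonneg m)
    have e2 : ((n ^ 2).toNat : ℤ) = n ^ 2 := Int.toNat_of_nonneg (sq_nonneg n)
    simp only [Finset.mem_sigma, Finset.HasAntidiagonal.mem_antidiagonal, Finset.mem_product, Sq,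
      mem_filter, Finset.mem_Icc]
    refine ⟨?_, ⟨⟨by rw [e1]; linarith, by rw [e1]; linarith⟩, e1.symm⟩,
      ⟨by rw [e2]; linarith, by rw [e2]; linarith⟩, e2.symm⟩
    have : ((m ^ 2).toNat : ℤ) + ((n ^ 2).toNat : ℤ) = (N : ℤ) := by rw [e1, e2]; exact hmn
    exact_mod_cast this
  · rintro ⟨⟨i, j⟩, m, n⟩ hy
    simp only [Finset.mem_sigma, Finset.HasAntidiagonal.mem_antidiagonal, Finset.mem_product, Sq,
      mem_filter, Finset.mem_Icc] at hy
    obtain ⟨hij, ⟨_, hm3⟩, _, hn3⟩ := hy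
    simp [hm3, hn3]
  · rintro ⟨m, n⟩ _; rfl
  · rintro y _; rfl

lemma key (x : ℝ) (k : ℕ) :
    ∑ p ∈ Dk (2 * k), tx x p.2 = ∑ p ∈ Dk k, tx x p.1 * tx x p.2 := by
  -- step 1 : reindex Dk (2k) by (a,b) ↦ (a+b, a-b)
  have step1 : ∑ p ∈ Dk k, tx x (p.1 - p.2) = ∑ p ∈ Dk (2 * k), tx x p.2 := by
    refine Finset.sum_nbij' (fun p => (p.1 + p.2, p.1 - p.2))
      (fun p => ((p.1 + p.2) / 2, (p.1 - p.2) / 2)) ?_ ?_ ?_ ?_ ?_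
    · rintro ⟨a, b⟩ hp
      simp only [Dk, mem_filter, Finset.mem_product, Finset.mem_Icc] at hp ⊢
      obtain ⟨⟨⟨h1, h2⟩, h3, h4⟩, hab⟩ := hp
      have ha : a ≤ a ^ 2 := Int.le_self_sq a
      have ha' : -(a ^ 2) ≤ a := neg_sq_le_self a
      have hb : b ≤ b ^ 2 := Int.le_self_sq b
      have hb' : -(b ^ 2) ≤ b := neg_sq_le_self b
      push_cast
      refine ⟨⟨⟨by linarith, by linarith⟩, by linarith, by linarith⟩,
        by linear_combination 2 * hab⟩
    · rintro ⟨m, n⟩ hp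
      simp only [Dk, mem_filter, Finset.mem_product, Finset.mem_Icc] at hp ⊢
      obtain ⟨⟨⟨h1, h2⟩, h3, h4⟩, hmn⟩ := hp
      have hmn' : m ^ 2 + n ^ 2 = 2 * (k : ℤ) := by push_cast at hmn; linarith
      obtain ⟨c, hc⟩ := even_add_of_sq_add_sq hmn'
      have hm : m = c + c - n := by omega
      have hu : (m + n) / 2 = c := by omega
      have hv : (m - n) / 2 = c - n := by omega
      rw [hu, hv]
      have h2k : 2 * (c ^ 2 + (c - n) ^ 2) = 2 * (k : ℤ) := by
        rw [hm] at hmn'; linear_combination hmn'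
      have hk' : c ^ 2 + (c - n) ^ 2 = (k : ℤ) := by linarith
      have hc1 : c ≤ c ^ 2 := Int.le_self_sq c
      have hc1' : -(c ^ 2) ≤ c := neg_sq_le_self c
      have hc2 : c - n ≤ (c - n) ^ 2 := Int.le_self_sq _
      have hc2' : -((c - n) ^ 2) ≤ c - n := neg_sq_le_self _
      have hs1 : 0 ≤ c ^ 2 := sq_nonneg c
      have hs2 : 0 ≤ (c - n) ^ 2 := sq_nonneg _
      exact ⟨⟨⟨by linarith, by linarith⟩, by linarith, by linarith⟩, hk'⟩
    · rintro ⟨a, b⟩ _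
      simp only [Prod.mk.injEq]
      omega
    · rintro ⟨m, n⟩ hp
      simp only [Dk, mem_filter, Finset.mem_product, Finset.mem_Icc] at hp
      have hmn' : m ^ 2 + n ^ 2 = 2 * (k : ℤ) := by
        have := hp.2; push_cast at this; linarith
      obtain ⟨c, hc⟩ := even_add_of_sq_add_sq hmn'
      simp only [Prod.mk.injEq]
      constructor <;> omega
    · rintro ⟨a, b⟩ _
      simp only
  rw [← step1]
  -- step 2 : product-to-sum for Chebyshev, plus symmetry b ↦ -b
  have hsym : ∑ p ∈ Dk k, tx x (p.1 + p.2) = ∑ p ∈ Dk k, tx x (p.1 - p.2) := by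
    refine Finset.sum_nbij' (fun p => (p.1, -p.2)) (fun p => (p.1, -p.2)) ?_ ?_ ?_ ?_ ?_
    · rintro ⟨a, b⟩ hp
      simp only [Dk, mem_filter, Finset.mem_product, Finset.mem_Icc] at hp ⊢
      refine ⟨⟨hp.1.1, by omega, by omega⟩, by linear_combination hp.2⟩
    · rintro ⟨a, b⟩ hp
      simp only [Dk, mem_filter, Finset.mem_product, Finset.mem_Icc] at hp ⊢
      refine ⟨⟨hp.1.1, by omega, by omega⟩, by linear_combination hp.2⟩
    · rintro ⟨a, b⟩ _; simp
    · rintro ⟨a, b⟩ _; simp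
    · rintro ⟨a, b⟩ _
      simp only
      rw [show a - -b = a + b by ring]
  have htwo : (2 : ℝ) * ∑ p ∈ Dk k, tx x p.1 * tx x p.2
      = 2 * ∑ p ∈ Dk k, tx x (p.1 - p.2) := by
    rw [Finset.mul_sum, Finset.mul_sum]
    calc ∑ p ∈ Dk k, 2 * (tx x p.1 * tx x p.2)
        = ∑ p ∈ Dk k, (tx x (p.1 + p.2) + tx x (p.1 - p.2)) :=
          Finset.sum_congr rfl fun p _ => tx_mul x p.1 p.2
      _ = (∑ p ∈ Dk k, tx x (p.1 + p.2)) + ∑ p ∈ Dk k, tx x (p.1 - p.2) :=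
          Finset.sum_add_distrib
      _ = ∑ p ∈ Dk k, 2 * tx x (p.1 - p.2) := by
          rw [hsym, ← Finset.sum_add_distrib]
          exact Finset.sum_congr rfl fun p _ => by ring
  linarith

/-- For every real `x`, `H(G(2,q) G(x,q)) = G(x,q)²`. -/
theorem huff_G_two_mul_G (x : ℝ) : H (G 2 * G x) = G x ^ 2 := by
  ext k
  rw [H, PowerSeries.coeff_mk, sq, PowerSeries.coeff_mul, PowerSeries.coeff_mul]
  have hL : ∑ ij ∈ Finset.HasAntidiagonal.antidiagonal (2 * k),
      (PowerSeries.coeff (R := ℝ) ij.1) (G 2) * (PowerSeries.coeff (R := ℝ) ij.2) (G x)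
      = ∑ p ∈ Dk (2 * k), tx x p.2 := by
    rw [show (∑ ij ∈ Finset.HasAntidiagonal.antidiagonal (2 * k),
        (PowerSeries.coeff (R := ℝ) ij.1) (G 2) * (PowerSeries.coeff (R := ℝ) ij.2) (G x))
        = ∑ ij ∈ Finset.HasAntidiagonal.antidiagonal (2 * k),
          (∑ m ∈ Sq ij.1, tx 2 m) * (∑ n ∈ Sq ij.2, tx x n) from
      Finset.sum_congr rfl fun ij _ => by rw [coeff_G, coeff_G],
      sum_antidiagonal_eq (tx 2) (tx x) (2 * k)]
    exact Finset.sum_congr rfl fun p _ => by rw [tx_two, one_mul]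
  have hR : ∑ ij ∈ Finset.HasAntidiagonal.antidiagonal k,
      (PowerSeries.coeff (R := ℝ) ij.1) (G x) * (PowerSeries.coeff (R := ℝ) ij.2) (G x)
      = ∑ p ∈ Dk k, tx x p.1 * tx x p.2 := by
    rw [show (∑ ij ∈ Finset.HasAntidiagonal.antidiagonal k,
        (PowerSeries.coeff (R := ℝ) ij.1) (G x) * (PowerSeries.coeff (R := ℝ) ij.2) (G x))
        = ∑ ij ∈ Finset.HasAntidiagonal.antidiagonal k,
          (∑ m ∈ Sq ij.1, tx x m) * (∑ n ∈ Sq ij.2, tx x n) from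
      Finset.sum_congr rfl fun ij _ => by rw [coeff_G, coeff_G]]
    exact sum_antidiagonal_eq (tx x) (tx x) k
  rw [hL, hR, key]
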